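/- For a differentiable function f : A → ℝ with A ⊆ ℝ open invex with respect to η, a, b ∈ A with a < a + η(b,a) and f′ integrable on [a, a+η(b,a)], we have −∫_0^1 (1−t)^α f′(a + t·η(b,a)) dt = f(a)/η(b,a) − (Γ(α+1)/η(b,a)^{α+1}) · J_{a+}^α f(a+η(b,a)), for every α > 0. -/

import Mathlib

open MeasureTheory intervalIntegral

/-- Riemann-Liouville left fractional integral `J_{a+}^α f(x)`. -/
noncomputable def JL (α a x : ℝ) (f : ℝ → ℝ) : ℝ :=
  (1 / Real.Gamma α) * ∫ t in a..x, (x - t) ^ (α - 1) * f t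

/-- Riemann-Liouville right fractional integral `J_{b-}^α f(x)`. -/
noncomputable def JR (α x b : ℝ) (f : ℝ → ℝ) : ℝ :=
  (1 / Real.Gamma α) * ∫ t in x..b, (t - x) ^ (α - 1) * f t

/-- `A` is invex with respect to `η`. -/
def InvexSet (A : Set ℝ) (η : ℝ → ℝ → ℝ) : Prop :=
  ∀ x ∈ A, ∀ y ∈ A, ∀ t ∈ Set.Icc (0:ℝ) 1, x + t * η y x ∈ A

/-- `f` is preinvex with respect to `η` on `A`. -/
def PreinvexOn (A : Set ℝ) (η : ℝ → ℝ → ℝ) (f : ℝ → ℝ) : Prop :=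
  ∀ x ∈ A, ∀ y ∈ A, ∀ t ∈ Set.Icc (0:ℝ) 1,
    f (x + t * η y x) ≤ (1 - t) * f x + t * f y

/-- Condition C of Mohan and Neogy. -/
def CondC (A : Set ℝ) (η : ℝ → ℝ → ℝ) : Prop :=
  ∀ x ∈ A, ∀ y ∈ A, ∀ t ∈ Set.Icc (0:ℝ) 1,
    η y (y + t * η x y) = -t * η x y ∧ η x (y + t * η x y) = (1 - t) * η x y

theorem integral_one_sub_tpow_deriv
    (A : Set ℝ) (η : ℝ → ℝ → ℝ) (a b : ℝ) (f : ℝ → ℝ) (α : ℝ)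
    (hA : IsOpen A) (hinv : InvexSet A η) (ha : a ∈ A) (hb : b ∈ A)
    (hab : a < a + η b a)
    (hdiff : ∀ x ∈ A, DifferentiableAt ℝ f x)
    (hint : IntervalIntegrable (deriv f) volume a (a + η b a))
    (hα : 0 < α) :
    -∫ t in (0:ℝ)..1, (1 - t) ^ α * deriv f (a + t * η b a) =
      f a / η b a -
        Real.Gamma (α + 1) / (η b a) ^ (α + 1) * JL α a (a + η b a) f := by
  set c : ℝ := η b a with hc_def
  have hc : 0 < c := by linarith
  have hmem : ∀ t ∈ Set.Icc (0:ℝ) 1, a + t * c ∈ A := fun t ht => hinv a ha b hb t ht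
  -- continuity of f ∘ (a + t c) on [0,1]
  have hlinc : Continuous fun t : ℝ => a + t * c := by fun_prop
  have hcf : ContinuousOn (fun t : ℝ => f (a + t * c)) (Set.Icc 0 1) := by
    intro t ht
    have h1 := ((hdiff _ (hmem t ht)).continuousAt).comp (x := t) hlinc.continuousAt
    exact h1.continuousWithinAt
  -- continuity of (1-t)^α on [0,1]
  have hcp : ContinuousOn (fun t : ℝ => (1 - t) ^ α) (Set.Icc 0 1) := fun t _ =>
    ((Real.continuousAt_rpow_const (1 - t) α (Or.inr hα.le)).comp
      ((continuous_const.sub continuous_id).continuousAt)).continuousWithinAt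
  -- integrability of the two pieces
  have hi1 : IntervalIntegrable (fun t : ℝ => (1 - t) ^ (α - 1) * f (a + t * c))
      volume 0 1 := by
    have h0 : IntervalIntegrable (fun x : ℝ => x ^ (α - 1)) volume 1 0 :=
      intervalIntegrable_rpow' (by linarith)
    have h1 := h0.comp_sub_left 1
    simp only [sub_self, sub_zero] at h1
    exact h1.mul_continuousOn (by simpa using hcf)
  have hi2 : IntervalIntegrable (fun t : ℝ => (1 - t) ^ α * deriv f (a + t * c))
      volume 0 1 := by
    have h0 : IntervalIntegrable (fun x : ℝ => deriv f (a + x)) volume 0 c := by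
      have := hint.comp_add_left a
      simpa using this
    have h1 : IntervalIntegrable (fun x : ℝ => deriv f (a + c * x)) volume 0 1 := by
      have := h0.comp_mul_left (c := c)
      simpa [hc.ne'] using this
    have h1' : IntervalIntegrable (fun x : ℝ => deriv f (a + x * c)) volume 0 1 := by
      simpa [mul_comm] using h1
    exact h1'.continuousOn_mul (by simpa using hcp)
  -- derivative of G t = (1-t)^α * f (a + t c) on Ioo 0 1
  have hG : ∀ t ∈ Set.Ioo (0:ℝ) 1,
      HasDerivAt (fun t : ℝ => (1 - t) ^ α * f (a + t * c))
        (α * (1 - t) ^ (α - 1) * (-1) * f (a + t * c) +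
          (1 - t) ^ α * (deriv f (a + t * c) * c)) t := by
    intro t ht
    have hne : (1 : ℝ) - t ≠ 0 := by
      have := ht.2; intro h; nlinarith [ht.1, ht.2]
    have hsub : HasDerivAt (fun t : ℝ => 1 - t) (-1) t := by
      simpa using (hasDerivAt_id t).const_sub 1
    have h1 : HasDerivAt (fun t : ℝ => (1 - t) ^ α) (α * (1 - t) ^ (α - 1) * (-1)) t :=
      (Real.hasDerivAt_rpow_const (Or.inl hne)).comp t hsub
    have hlin : HasDerivAt (fun t : ℝ => a + t * c) c t := by
      simpa using ((hasDerivAt_id t).mul_const c).const_add a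
    have h2 : HasDerivAt (fun t : ℝ => f (a + t * c)) (deriv f (a + t * c) * c) t :=
      ((hdiff _ (hmem t (Set.mem_Icc.2 ⟨ht.1.le, ht.2.le⟩))).hasDerivAt).comp t hlin
    exact h1.mul h2
  -- continuity of G on [0,1]
  have hGc : ContinuousOn (fun t : ℝ => (1 - t) ^ α * f (a + t * c)) (Set.Icc 0 1) :=
    hcp.mul hcf
  -- FTC
  have hftc : (∫ t in (0:ℝ)..1,
      (α * (1 - t) ^ (α - 1) * (-1) * f (a + t * c) +
        (1 - t) ^ α * (deriv f (a + t * c) * c))) = 0 - f a := by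
    have := intervalIntegral.integral_eq_sub_of_hasDerivAt_of_le zero_le_one hGc hG
      (by
        have e1 : (fun t : ℝ => α * (1 - t) ^ (α - 1) * (-1) * f (a + t * c)) =
            fun t : ℝ => (-α) * ((1 - t) ^ (α - 1) * f (a + t * c)) := by
          funext t; ring
        have e2 : (fun t : ℝ => (1 - t) ^ α * (deriv f (a + t * c) * c)) =
            fun t : ℝ => c * ((1 - t) ^ α * deriv f (a + t * c)) := by
          funext t; ring
        exact ((e1 ▸ hi1.const_mul (-α)).add (e2 ▸ hi2.const_mul c) : _))
    rw [this]
    norm_num [Real.zero_rpow hα.ne', Real.one_rpow]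
  -- compute the two integrals
  set I1 : ℝ := ∫ t in (0:ℝ)..1, (1 - t) ^ (α - 1) * f (a + t * c) with hI1
  set I2 : ℝ := ∫ t in (0:ℝ)..1, (1 - t) ^ α * deriv f (a + t * c) with hI2
  have hsplit : -α * I1 + c * I2 = -f a := by
    have e1 : (∫ t in (0:ℝ)..1, α * (1 - t) ^ (α - 1) * (-1) * f (a + t * c)) = -α * I1 := by
      rw [hI1, ← intervalIntegral.integral_const_mul]
      congr 1; funext t; ring
    have e2 : (∫ t in (0:ℝ)..1, (1 - t) ^ α * (deriv f (a + t * c) * c)) = c * I2 := by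
      rw [hI2, ← intervalIntegral.integral_const_mul]
      congr 1; funext t; ring
    have hadd := intervalIntegral.integral_add
      (show IntervalIntegrable (fun t : ℝ => α * (1 - t) ^ (α - 1) * (-1) * f (a + t * c))
          volume 0 1 by
        have e : (fun t : ℝ => α * (1 - t) ^ (α - 1) * (-1) * f (a + t * c)) =
            fun t : ℝ => (-α) * ((1 - t) ^ (α - 1) * f (a + t * c)) := by funext t; ring
        exact e ▸ hi1.const_mul (-α))
      (show IntervalIntegrable (fun t : ℝ => (1 - t) ^ α * (deriv f (a + t * c) * c))
          volume 0 1 by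
        have e : (fun t : ℝ => (1 - t) ^ α * (deriv f (a + t * c) * c)) =
            fun t : ℝ => c * ((1 - t) ^ α * deriv f (a + t * c)) := by funext t; ring
        exact e ▸ hi2.const_mul c)
    rw [hadd, e1, e2] at hftc
    linarith [hftc]
  -- substitution for JL
  have hsubst : (∫ x in a..(a + c), (a + c - x) ^ (α - 1) * f x) = c ^ α * I1 := by
    have h := intervalIntegral.integral_comp_mul_add
      (a := (0:ℝ)) (b := 1) (fun x : ℝ => (a + c - x) ^ (α - 1) * f x) hc.ne' a
    simp only [mul_zero, zero_add, mul_one] at h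
    -- h : ∫ t in 0..1, (a + c - (c*t + a))^(α-1) * f (c*t+a) = c⁻¹ • ∫ x in a..(c+a), ...
    have hcongr : (∫ t in (0:ℝ)..1, (a + c - (c * t + a)) ^ (α - 1) * f (c * t + a)) =
        c ^ (α - 1) * I1 := by
      rw [hI1, ← intervalIntegral.integral_const_mul]
      apply intervalIntegral.integral_congr
      intro t ht
      rw [Set.uIcc_of_le zero_le_one] at ht
      have h1t : (0:ℝ) ≤ 1 - t := by linarith [ht.2]
      show (a + c - (c * t + a)) ^ (α - 1) * f (c * t + a)
          = c ^ (α - 1) * ((1 - t) ^ (α - 1) * f (a + t * c))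
      have he : a + c - (c * t + a) = c * (1 - t) := by ring
      rw [he, Real.mul_rpow hc.le h1t, mul_comm c t, add_comm (t * c) a]
      ring
    rw [hcongr] at h
    have hba : c + a = a + c := by ring
    rw [hba] at h
    have h2 : (∫ x in a..(a + c), (a + c - x) ^ (α - 1) * f x) = c * (c ^ (α - 1) * I1) := by
      rw [h, smul_eq_mul]
      field_simp
    rw [h2, ← mul_assoc, mul_comm c (c ^ (α - 1)), ← Real.rpow_add_one hc.ne']
    norm_num
  -- final algebra
  have hΓ : Real.Gamma (α + 1) = α * Real.Gamma α := Real.Gamma_add_one hα.ne'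
  have hΓpos : 0 < Real.Gamma α := Real.Gamma_pos_of_pos hα
  have hJL : Real.Gamma (α + 1) / c ^ (α + 1) * JL α a (a + c) f = α / c * I1 := by
    rw [JL, hsubst, hΓ]
    rw [Real.rpow_add_one hc.ne' α]
    have hcα : (0:ℝ) < c ^ α := Real.rpow_pos_of_pos hc α
    field_simp
  rw [hJL]
  have : -I2 = f a / c - α / c * I1 := by
    field_simp
    linarith [hsplit]
  linarith [this]
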